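/- arXiv:2405.11377 — 4 statements merged into one kernel-verified Lean document; each statement's English description precedes it below -/
import Mathlib

section
/- Let L ≥ 1, r ≥ 2, let E be a real normed vector space, let S : {1,…,r} → E, and suppose Δ_min² := min_{a ≠ b} ‖S(a) − S(b)‖² > 0. For label vectors c, d : {1,…,L} → {1,…,r} define the classification error rate h(c,d) = min_{π ∈ Π_r} (1/L) Σ_{l=1}^{L} 1{c_l ≠ π(d_l)} and the misclassification loss g(c,d) = min_{π ∈ Π_r} (1/L) Σ_{l=1}^{L} ‖S(c_l) − S(π(d_l))‖², where Π_r is the set of all permutations of {1,…,r}. Then h(c,d) ≤ g(c,d)/Δ_min². -/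
/-- Relation between the classification error rate `h(c,d)` and the
misclassification loss `g(c,d)`: `h(c,d) ≤ g(c,d) / Δ_min²`, where `Δ_min²` is the minimal
squared separation between distinct centroids `S a`, `S b`. -/
theorem classification_error_le_misclassification_loss_div_sep
    (L r : ℕ) (hL : 1 ≤ L) (hr : 2 ≤ r)
    (E : Type*) [NormedAddCommGroup E] [NormedSpace ℝ E]
    (S : Fin r → E) (Δ2 : ℝ)
    (hΔ2 : Δ2 = sInf {x : ℝ | ∃ a b : Fin r, a ≠ b ∧ x = ‖S a - S b‖ ^ 2})
    (hΔpos : 0 < Δ2)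
    (c d : Fin L → Fin r) :
    (Finset.univ.inf' Finset.univ_nonempty fun π : Equiv.Perm (Fin r) =>
        (1 / (L : ℝ)) * ∑ l : Fin L, if c l ≠ π (d l) then (1 : ℝ) else 0)
      ≤ (Finset.univ.inf' Finset.univ_nonempty fun π : Equiv.Perm (Fin r) =>
        (1 / (L : ℝ)) * ∑ l : Fin L, ‖S (c l) - S (π (d l))‖ ^ 2) / Δ2 := by
  have hsep : ∀ a b : Fin r, a ≠ b → Δ2 ≤ ‖S a - S b‖ ^ 2 := by
    intro a b hab
    rw [hΔ2]
    apply csInf_le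
    · exact ⟨0, fun x ⟨a', b', _, hx⟩ => hx ▸ sq_nonneg _⟩
    · exact ⟨a, b, hab, rfl⟩
  obtain ⟨π₀, -, hπ₀⟩ := Finset.exists_mem_eq_inf' (Finset.univ_nonempty)
    (fun π : Equiv.Perm (Fin r) =>
      (1 / (L : ℝ)) * ∑ l : Fin L, ‖S (c l) - S (π (d l))‖ ^ 2)
  rw [hπ₀]
  have h1 : (Finset.univ.inf' Finset.univ_nonempty fun π : Equiv.Perm (Fin r) =>
      (1 / (L : ℝ)) * ∑ l : Fin L, if c l ≠ π (d l) then (1 : ℝ) else 0)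
      ≤ (1 / (L : ℝ)) * ∑ l : Fin L, if c l ≠ π₀ (d l) then (1 : ℝ) else 0 :=
    Finset.inf'_le _ (Finset.mem_univ π₀)
  refine h1.trans ?_
  rw [le_div_iff₀ hΔpos]
  have key : ∀ l : Fin L, (if c l ≠ π₀ (d l) then (1 : ℝ) else 0) * Δ2
      ≤ ‖S (c l) - S (π₀ (d l))‖ ^ 2 := by
    intro l
    by_cases h : c l ≠ π₀ (d l)
    · rw [if_pos h, one_mul]
      exact hsep _ _ h
    · rw [if_neg h, zero_mul]
      positivity
  calc (1 / (L : ℝ)) * (∑ l : Fin L, if c l ≠ π₀ (d l) then (1 : ℝ) else 0) * Δ2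
      = (1 / (L : ℝ)) * ∑ l : Fin L, (if c l ≠ π₀ (d l) then (1 : ℝ) else 0) * Δ2 := by
        rw [mul_assoc, Finset.sum_mul]
    _ ≤ (1 / (L : ℝ)) * ∑ l : Fin L, ‖S (c l) - S (π₀ (d l))‖ ^ 2 := by
        apply mul_le_mul_of_nonneg_left _ (by positivity)
        exact Finset.sum_le_sum fun l _ => key l
end

section
/- Let B be an r×r real matrix with nonnegative entries such that every column of B sums to 1, i.e., Σ_{b'} B_{b'b} = 1 for each b. Then the Frobenius norm of I − B satisfies ‖I − B‖_F ≤ √2 · Σ_{b=1}^{r} (1 − B_{bb}). -/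
/-- If `B` is an `r×r` nonnegative matrix whose columns sum to `1`, then
the Frobenius norm of `I − B` satisfies `‖I − B‖_F ≤ √2 · Σ_b (1 − B_{bb})`. -/
theorem frobenius_one_sub_column_stochastic_le
    (r : ℕ) (B : Matrix (Fin r) (Fin r) ℝ)
    (hpos : ∀ i j, 0 ≤ B i j)
    (hcol : ∀ b, ∑ b', B b' b = 1) :
    Real.sqrt (∑ i, ∑ j, ((if i = j then (1 : ℝ) else 0) - B i j) ^ 2)
      ≤ Real.sqrt 2 * ∑ b, (1 - B b b) := by
  set T := ∑ b, (1 - B b b) with hT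
  have hs : ∀ b : Fin r, 0 ≤ 1 - B b b := by
    intro b
    have h1 : B b b ≤ ∑ b', B b' b :=
      Finset.single_le_sum (fun i _ => hpos i b) (Finset.mem_univ b)
    have := hcol b
    linarith
  have hT0 : 0 ≤ T := Finset.sum_nonneg fun b _ => hs b
  have sumsq : ∀ (s : Finset (Fin r)) (f : Fin r → ℝ), (∀ i ∈ s, 0 ≤ f i) →
      ∑ i ∈ s, (f i)^2 ≤ (∑ i ∈ s, f i)^2 := by
    intro s f hf
    calc ∑ i ∈ s, (f i)^2 ≤ ∑ i ∈ s, f i * ∑ j ∈ s, f j := by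
          apply Finset.sum_le_sum
          intro i hi
          have h1 : f i ≤ ∑ j ∈ s, f j := Finset.single_le_sum hf hi
          have := mul_le_mul_of_nonneg_left h1 (hf i hi)
          simpa [sq] using this
      _ = (∑ i ∈ s, f i)^2 := by rw [← Finset.sum_mul, sq]
  have hcolbound : ∀ j : Fin r,
      ∑ i, ((if i = j then (1:ℝ) else 0) - B i j)^2 ≤ 2 * (1 - B j j)^2 := by
    intro j
    rw [← Finset.add_sum_erase _ _ (Finset.mem_univ j)]
    simp only [eq_self_iff_true, if_true]
    have h1 : ∑ i ∈ Finset.univ.erase j, ((if i = j then (1:ℝ) else 0) - B i j)^2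
        = ∑ i ∈ Finset.univ.erase j, (B i j)^2 := by
      apply Finset.sum_congr rfl
      intro i hi
      rw [if_neg (Finset.ne_of_mem_erase hi)]
      ring
    rw [h1]
    have h2 : ∑ i ∈ Finset.univ.erase j, B i j = 1 - B j j := by
      have h := Finset.add_sum_erase Finset.univ (fun i => B i j) (Finset.mem_univ j)
      rw [hcol j] at h
      linarith
    have h3 := sumsq (Finset.univ.erase j) (fun i => B i j) (fun i _ => hpos i j)
    rw [h2] at h3
    nlinarith [h3]
  have hS : ∑ i, ∑ j, ((if i = j then (1:ℝ) else 0) - B i j)^2 ≤ 2 * T^2 := by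
    rw [Finset.sum_comm]
    calc ∑ j, ∑ i, ((if i = j then (1:ℝ) else 0) - B i j)^2
        ≤ ∑ j : Fin r, 2 * (1 - B j j)^2 := Finset.sum_le_sum fun j _ => hcolbound j
      _ = 2 * ∑ j, (1 - B j j)^2 := by rw [Finset.mul_sum]
      _ ≤ 2 * T^2 := by
          have := sumsq Finset.univ (fun b => 1 - B b b) (fun b _ => hs b)
          rw [hT]
          linarith
  calc Real.sqrt (∑ i, ∑ j, ((if i = j then (1:ℝ) else 0) - B i j)^2)
      ≤ Real.sqrt (2 * T^2) := Real.sqrt_le_sqrt hS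
    _ = Real.sqrt 2 * T := by
        rw [Real.sqrt_mul (by norm_num), Real.sqrt_sq hT0]
end

section
/- Let z, ẑ : {1,…,L} → {1,…,r} be two label vectors, let M be the membership matrix of z, and suppose every class of ẑ is nonempty with sizes n̂_b = #{l : ẑ_l = b}; let Ŵ be the normalized membership matrix of ẑ. Then ‖I − MᵀŴ‖_F ≤ √2 · (min_{b} n̂_b)^{-1} · #{l : z_l ≠ ẑ_l}. -/
/-- For two label vectors `z`, `ẑ` with membership matrix `M` of `z` and
normalized membership matrix `Ŵ` of `ẑ` (all classes of `ẑ` nonempty),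
`‖I − Mᵀ Ŵ‖_F ≤ √2 · (min_b n̂_b)⁻¹ · #{l : z_l ≠ ẑ_l}`. -/
theorem frobenius_one_sub_transpose_membership_mul_normalized_le
    (L r : ℕ) (hr : 0 < r) (z zhat : Fin L → Fin r)
    (M : Matrix (Fin L) (Fin r) ℝ)
    (hM : ∀ l b, M l b = if z l = b then 1 else 0)
    (nhat : Fin r → ℕ)
    (hn : ∀ b, nhat b = (Finset.univ.filter fun l => zhat l = b).card)
    (hpos : ∀ b, 0 < nhat b)
    (What : Matrix (Fin L) (Fin r) ℝ)
    (hW : ∀ l b, What l b = (if zhat l = b then 1 else 0) / (nhat b : ℝ)) :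
    Real.sqrt (∑ i, ∑ j, ((if i = j then (1 : ℝ) else 0) - (M.transpose * What) i j) ^ 2)
      ≤ Real.sqrt 2
          * ((Finset.univ.inf' ⟨⟨0, hr⟩, Finset.mem_univ _⟩ fun b => nhat b : ℕ) : ℝ)⁻¹
          * ((Finset.univ.filter fun l => z l ≠ zhat l).card : ℝ) := by
  classical
  set nmin : ℕ := Finset.univ.inf' ⟨⟨0, hr⟩, Finset.mem_univ _⟩ fun b => nhat b with hnmin
  have hnminpos : 0 < nmin := by
    rw [hnmin]
    exact (Finset.lt_inf'_iff _).2 fun b _ => hpos b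
  have hnminle : ∀ b, nmin ≤ nhat b := fun b =>
    Finset.inf'_le _ (Finset.mem_univ b)
  have hnminR : (0 : ℝ) < (nmin : ℝ) := by exact_mod_cast hnminpos
  -- mismatch counts per class of `zhat`
  set mR : Fin r → ℝ := fun b => ∑ l, (if zhat l = b ∧ z l ≠ zhat l then (1:ℝ) else 0) with hmR
  have hmRnonneg : ∀ b, 0 ≤ mR b := fun b =>
    Finset.sum_nonneg fun l _ => by positivity
  set E : ℝ := ((Finset.univ.filter fun l => z l ≠ zhat l).card : ℝ) with hE
  have hEnonneg : 0 ≤ E := by rw [hE]; positivity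
  have hEsum : ∑ b, mR b = E := by
    rw [hE, Finset.card_filter]
    push_cast
    rw [Finset.sum_comm]
    refine Finset.sum_congr rfl fun l _ => ?_
    by_cases h : z l ≠ zhat l <;> simp [h]
  -- confusion counts
  set c : Fin r → Fin r → ℝ := fun a b => ∑ l, (if z l = a ∧ zhat l = b then (1:ℝ) else 0) with hc
  have hcnonneg : ∀ a b, 0 ≤ c a b := fun a b =>
    Finset.sum_nonneg fun l _ => by positivity
  have hentry : ∀ a b, (M.transpose * What) a b = c a b / (nhat b : ℝ) := by
    intro a b
    rw [Matrix.mul_apply, hc]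
    simp only [Matrix.transpose_apply]
    have hpt : ∀ l, M l a * What l b
        = (if z l = a ∧ zhat l = b then (1:ℝ) else 0) / (nhat b : ℝ) := by
      intro l
      rw [hM, hW]
      by_cases h1 : z l = a <;> by_cases h2 : zhat l = b <;> simp [h1, h2]
    simp_rw [hpt]
    rw [Finset.sum_div]
  -- diagonal decomposition
  have hdiag : ∀ b, (nhat b : ℝ) = c b b + mR b := by
    intro b
    rw [hn, Finset.card_filter]
    push_cast
    rw [hc, hmR, ← Finset.sum_add_distrib]
    refine Finset.sum_congr rfl fun l _ => ?_
    by_cases h2 : zhat l = b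
    · by_cases h1 : z l = b <;> simp [h1, h2]
    · simp [h2]
  -- off-diagonal column sum
  have hoff : ∀ b, ∑ a ∈ Finset.univ.erase b, c a b = mR b := by
    intro b
    rw [hmR, hc, Finset.sum_comm]
    refine Finset.sum_congr rfl fun l _ => ?_
    by_cases h2 : zhat l = b
    · subst h2
      by_cases h1 : z l = zhat l
      · simp [h1]
      · rw [Finset.sum_eq_single (z l)] <;> simp_all [eq_comm]
    · simp [h2]
  -- per-column bound
  have hcol : ∀ b, ∑ a, ((if a = b then (1:ℝ) else 0) - (M.transpose * What) a b) ^ 2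
      ≤ 2 * (mR b / (nhat b : ℝ)) ^ 2 := by
    intro b
    have hnb : (0:ℝ) < (nhat b : ℝ) := by exact_mod_cast hpos b
    rw [← Finset.add_sum_erase _ _ (Finset.mem_univ b)]
    have hdterm : ((if b = b then (1:ℝ) else 0) - (M.transpose * What) b b) ^ 2
        = (mR b / (nhat b : ℝ)) ^ 2 := by
      rw [hentry, if_pos rfl]
      congr 1
      rw [eq_div_iff hnb.ne', sub_mul, one_mul, div_mul_cancel₀ _ hnb.ne']
      linarith [hdiag b]
    have hoterm : ∑ a ∈ Finset.univ.erase b,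
        ((if a = b then (1:ℝ) else 0) - (M.transpose * What) a b) ^ 2
        ≤ (mR b / (nhat b : ℝ)) ^ 2 := by
      have h1 : ∀ a ∈ Finset.univ.erase b,
          ((if a = b then (1:ℝ) else 0) - (M.transpose * What) a b) ^ 2
          = (c a b / (nhat b : ℝ)) ^ 2 := by
        intro a ha
        rw [hentry, if_neg (Finset.mem_erase.mp ha).1, zero_sub, neg_sq]
      rw [Finset.sum_congr rfl h1]
      calc ∑ a ∈ Finset.univ.erase b, (c a b / (nhat b : ℝ)) ^ 2
          ≤ (∑ a ∈ Finset.univ.erase b, c a b / (nhat b : ℝ)) ^ 2 :=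
            Finset.sum_sq_le_sq_sum_of_nonneg fun a _ => by positivity
        _ = (mR b / (nhat b : ℝ)) ^ 2 := by rw [← Finset.sum_div, hoff]
    rw [hdterm]
    linarith
  -- total bound
  have htot : ∑ i, ∑ j, ((if i = j then (1 : ℝ) else 0) - (M.transpose * What) i j) ^ 2
      ≤ 2 * (E / (nmin : ℝ)) ^ 2 := by
    rw [Finset.sum_comm]
    calc ∑ b, ∑ a, ((if a = b then (1:ℝ) else 0) - (M.transpose * What) a b) ^ 2
        ≤ ∑ b, 2 * (mR b / (nhat b : ℝ)) ^ 2 :=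
          Finset.sum_le_sum fun b _ => hcol b
      _ = 2 * ∑ b, (mR b / (nhat b : ℝ)) ^ 2 := by rw [Finset.mul_sum]
      _ ≤ 2 * (∑ b, mR b / (nhat b : ℝ)) ^ 2 := by
          have := Finset.sum_sq_le_sq_sum_of_nonneg
            (s := Finset.univ) (f := fun b => mR b / (nhat b : ℝ))
            (fun b _ => by positivity)
          linarith
      _ ≤ 2 * (E / (nmin : ℝ)) ^ 2 := by
          have hle : ∑ b, mR b / (nhat b : ℝ) ≤ E / (nmin : ℝ) := by
            calc ∑ b, mR b / (nhat b : ℝ) ≤ ∑ b, mR b / (nmin : ℝ) := by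
                  refine Finset.sum_le_sum fun b _ => ?_
                  rw [div_eq_mul_inv, div_eq_mul_inv]
                  exact mul_le_mul_of_nonneg_left
                    (inv_anti₀ hnminR (by exact_mod_cast hnminle b)) (hmRnonneg b)
              _ = E / (nmin : ℝ) := by rw [← Finset.sum_div, hEsum]
          have h0 : 0 ≤ ∑ b, mR b / (nhat b : ℝ) :=
            Finset.sum_nonneg fun b _ => by positivity
          nlinarith
  calc Real.sqrt (∑ i, ∑ j, ((if i = j then (1 : ℝ) else 0) - (M.transpose * What) i j) ^ 2)
      ≤ Real.sqrt (2 * (E / (nmin : ℝ)) ^ 2) := Real.sqrt_le_sqrt htot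
    _ = Real.sqrt 2 * ((nmin : ℝ))⁻¹ * E := by
        rw [Real.sqrt_mul (by norm_num), Real.sqrt_sq (by positivity)]
        ring
end

section
/- Let σ > 0, α ≥ 0, and let f(θ) = exp(θ/σ)/(1 + exp(θ/σ)) be the logistic link with scale σ. Then the convexity constant γ_α := inf_{|θ| ≤ α} min( (f′(θ))²/f(θ)² − f″(θ)/f(θ), f″(θ)/(1 − f(θ)) + (f′(θ))²/(1 − f(θ))² ) equals f(α)(1 − f(α))/σ² = exp(α/σ)/(σ²(1 + exp(α/σ))²). -/
/-- For the logistic link `f(θ) = exp(θ/σ)/(1 + exp(θ/σ))` with scale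
`σ > 0` and `α ≥ 0`, the convexity constant
`γ_α = inf_{|θ| ≤ α} min((f′)²/f² − f″/f, f″/(1−f) + (f′)²/(1−f)²)` equals
`f(α)(1 − f(α))/σ² = exp(α/σ)/(σ²(1 + exp(α/σ))²)`. -/
theorem logistic_link_convexity_constant
    (σ α : ℝ) (hσ : 0 < σ) (hα : 0 ≤ α) (f : ℝ → ℝ)
    (hf : ∀ θ, f θ = Real.exp (θ / σ) / (1 + Real.exp (θ / σ))) :
    sInf {x : ℝ | ∃ θ, |θ| ≤ α ∧
        x = min (deriv f θ ^ 2 / f θ ^ 2 - deriv (deriv f) θ / f θ)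
          (deriv (deriv f) θ / (1 - f θ) + deriv f θ ^ 2 / (1 - f θ) ^ 2)}
      = Real.exp (α / σ) / (σ ^ 2 * (1 + Real.exp (α / σ)) ^ 2) := by
  have hσ' : σ ≠ 0 := ne_of_gt hσ
  have hfe : f = fun θ => Real.exp (θ / σ) / (1 + Real.exp (θ / σ)) := funext hf
  -- first derivative
  have key : ∀ θ : ℝ, HasDerivAt f
      (Real.exp (θ / σ) / (σ * (1 + Real.exp (θ / σ)) ^ 2)) θ := by
    intro θ
    rw [hfe]
    have h1 : HasDerivAt (fun θ : ℝ => θ / σ) (1 / σ) θ := (hasDerivAt_id θ).div_const σ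
    have h2 : HasDerivAt (fun θ : ℝ => Real.exp (θ / σ)) (Real.exp (θ / σ) * (1 / σ)) θ := h1.exp
    have h3 : HasDerivAt (fun θ : ℝ => 1 + Real.exp (θ / σ)) (Real.exp (θ / σ) * (1 / σ)) θ :=
      h2.const_add 1
    have hne : (1 + Real.exp (θ / σ)) ≠ 0 := by positivity
    have := h2.div h3 hne
    refine this.congr_deriv ?_
    field_simp
    ring
  have hd1 : deriv f = fun θ => Real.exp (θ / σ) / (σ * (1 + Real.exp (θ / σ)) ^ 2) :=
    funext fun θ => (key θ).deriv
  -- second derivative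
  have key2 : ∀ θ : ℝ, HasDerivAt (deriv f)
      (Real.exp (θ / σ) * (1 - Real.exp (θ / σ)) / (σ ^ 2 * (1 + Real.exp (θ / σ)) ^ 3)) θ := by
    intro θ
    rw [hd1]
    have h1 : HasDerivAt (fun θ : ℝ => θ / σ) (1 / σ) θ := (hasDerivAt_id θ).div_const σ
    have h2 : HasDerivAt (fun θ : ℝ => Real.exp (θ / σ)) (Real.exp (θ / σ) * (1 / σ)) θ := h1.exp
    have h3 : HasDerivAt (fun θ : ℝ => 1 + Real.exp (θ / σ)) (Real.exp (θ / σ) * (1 / σ)) θ :=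
      h2.const_add 1
    have h4 : HasDerivAt (fun θ : ℝ => σ * (1 + Real.exp (θ / σ)) ^ 2)
        (σ * ((2:ℕ) * (1 + Real.exp (θ / σ)) ^ 1 * (Real.exp (θ / σ) * (1 / σ)))) θ :=
      (h3.pow 2).const_mul σ
    have hne : σ * (1 + Real.exp (θ / σ)) ^ 2 ≠ 0 := by positivity
    have := h2.div h4 hne
    refine this.congr_deriv ?_
    have hne2 : (1 + Real.exp (θ / σ)) ≠ 0 := by positivity
    field_simp
    ring
  have hd2 : deriv (deriv f) = fun θ =>
      Real.exp (θ / σ) * (1 - Real.exp (θ / σ)) / (σ ^ 2 * (1 + Real.exp (θ / σ)) ^ 3) :=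
    funext fun θ => (key2 θ).deriv
  -- the min simplifies
  set h : ℝ → ℝ := fun θ => Real.exp (θ / σ) / (σ ^ 2 * (1 + Real.exp (θ / σ)) ^ 2) with hh
  have hmin : ∀ θ : ℝ,
      min (deriv f θ ^ 2 / f θ ^ 2 - deriv (deriv f) θ / f θ)
        (deriv (deriv f) θ / (1 - f θ) + deriv f θ ^ 2 / (1 - f θ) ^ 2) = h θ := by
    intro θ
    set e := Real.exp (θ / σ) with he
    have he0 : 0 < e := Real.exp_pos _
    have hne : (1 + e) ≠ 0 := by positivity
    have hfθ : f θ = e / (1 + e) := hf θ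
    have h1f : 1 - f θ = 1 / (1 + e) := by rw [hfθ]; field_simp; ring
    have hfθ0 : f θ ≠ 0 := by rw [hfθ]; positivity
    have hA : deriv f θ ^ 2 / f θ ^ 2 - deriv (deriv f) θ / f θ = h θ := by
      rw [hd2, hd1, hfθ, hh]
      field_simp
      ring
    have hB : deriv (deriv f) θ / (1 - f θ) + deriv f θ ^ 2 / (1 - f θ) ^ 2 = h θ := by
      rw [hd2, hd1, h1f, hh]
      field_simp
      ring
    rw [hA, hB, min_self]
  -- rewrite the set
  have hset : {x : ℝ | ∃ θ, |θ| ≤ α ∧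
        x = min (deriv f θ ^ 2 / f θ ^ 2 - deriv (deriv f) θ / f θ)
          (deriv (deriv f) θ / (1 - f θ) + deriv f θ ^ 2 / (1 - f θ) ^ 2)}
      = {x : ℝ | ∃ θ, |θ| ≤ α ∧ x = h θ} := by
    ext x
    simp only [Set.mem_setOf_eq, hmin]
  rw [hset]
  -- monotonicity
  have hmono : ∀ θ : ℝ, |θ| ≤ α → h α ≤ h θ := by
    intro θ hθ
    have h1 : θ ≤ α := le_trans (le_abs_self θ) hθ
    have h2 : -α ≤ θ := neg_le_of_abs_le hθ
    have e1 : Real.exp (θ / σ) ≤ Real.exp (α / σ) :=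
      Real.exp_le_exp.2 (by gcongr)
    have e2 : Real.exp (-α / σ) ≤ Real.exp (θ / σ) :=
      Real.exp_le_exp.2 (by gcongr)
    have e3 : Real.exp (-α / σ) * Real.exp (α / σ) = 1 := by
      rw [← Real.exp_add, show -α / σ + α / σ = 0 by ring, Real.exp_zero]
    have ea0 : 0 < Real.exp (α / σ) := Real.exp_pos _
    have et0 : 0 < Real.exp (θ / σ) := Real.exp_pos _
    rw [hh]
    rw [div_le_div_iff₀ (by positivity) (by positivity)]
    have hprod : 1 ≤ Real.exp (θ / σ) * Real.exp (α / σ) := by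
      nlinarith [mul_le_mul_of_nonneg_right e2 ea0.le]
    have hkey : Real.exp (α / σ) * (1 + Real.exp (θ / σ)) ^ 2
        ≤ Real.exp (θ / σ) * (1 + Real.exp (α / σ)) ^ 2 := by
      nlinarith [mul_nonneg (sub_nonneg.2 e1) (sub_nonneg.2 hprod)]
    nlinarith [mul_le_mul_of_nonneg_left hkey (sq_nonneg σ)]
  have hmem : h α ∈ {x : ℝ | ∃ θ, |θ| ≤ α ∧ x = h θ} :=
    ⟨α, by rw [abs_of_nonneg hα], rfl⟩
  have hbdd : BddBelow {x : ℝ | ∃ θ, |θ| ≤ α ∧ x = h θ} := by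
    refine ⟨0, fun x hx => ?_⟩
    obtain ⟨θ, _, rfl⟩ := hx
    rw [hh]; positivity
  have : sInf {x : ℝ | ∃ θ, |θ| ≤ α ∧ x = h θ} = h α := by
    apply le_antisymm (csInf_le hbdd hmem)
    apply le_csInf ⟨h α, hmem⟩
    rintro x ⟨θ, hθ, rfl⟩
    exact hmono θ hθ
  rw [this, hh]
end
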